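/- arXiv:1805.09415 — 2 statements merged into one kernel-verified Lean document; each statement's English description precedes it below -/
import Mathlib

section
/- Let (X_t) be a random process over the reals, and let T = inf{t : X_t ≤ 0}. Suppose (a) X_t ≥ 0 for all t ≤ T, and (b) there is δ > 0 such that X_t − E[X_{t+1} | X_0,…,X_t] ≥ δ for all t < T. Then E[T | X_0] ≤ X_0/δ. -/
open MeasureTheory ProbabilityTheory Filter
open scoped ENNReal NNReal

/-- The natural filtration of the process `X` up to time `t`:
the σ-algebra generated by `X 0, …, X t`. -/
noncomputable def natSigma {Ω : Type*} [MeasurableSpace Ω] (X : ℕ → Ω → ℝ) (t : ℕ) :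
    MeasurableSpace Ω :=
  ⨆ s ∈ Finset.range (t + 1), MeasurableSpace.comap (X s) inferInstance

/-- The first-hitting time `T = inf {t : X t ≤ 0}` (equal to `⊤` if no such time exists). -/
noncomputable def hitZero {Ω : Type*} (X : ℕ → Ω → ℝ) (ω : Ω) : ℕ∞ :=
  sInf ((fun n : ℕ => (n : ℕ∞)) '' {t : ℕ | X t ω ≤ 0})

lemma le_hitZero_iff {Ω : Type*} {X : ℕ → Ω → ℝ} {ω : Ω} {t : ℕ} :
    (t : ℕ∞) ≤ hitZero X ω ↔ ∀ s < t, 0 < X s ω := by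
  constructor
  · intro h s hs
    by_contra hx
    push_neg at hx
    have h1 : hitZero X ω ≤ s := sInf_le ⟨s, hx, rfl⟩
    have h2 : (t : ℕ∞) ≤ (s : ℕ∞) := h.trans h1
    exact absurd (by exact_mod_cast h2) (not_le.mpr hs)
  · intro h
    apply le_sInf
    rintro b ⟨s, hs, rfl⟩
    by_contra hb
    push_neg at hb
    have hst : s < t := by exact_mod_cast hb
    exact absurd (h s hst) (not_lt.mpr hs)

lemma lt_hitZero_iff {Ω : Type*} {X : ℕ → Ω → ℝ} {ω : Ω} {t : ℕ} :
    (t : ℕ∞) < hitZero X ω ↔ ∀ s ≤ t, 0 < X s ω := by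
  have h : ((t : ℕ∞) < hitZero X ω) ↔ (((t + 1 : ℕ) : ℕ∞) ≤ hitZero X ω) := by
    rw [Nat.cast_add, Nat.cast_one, ENat.add_one_le_iff (by simp)]
  rw [h, le_hitZero_iff]
  exact ⟨fun h s hs => h s (Nat.lt_succ_of_le hs), fun h s hs => h s (Nat.lt_succ_iff.mp hs)⟩

lemma iSup_min_toNat_toENNReal (a : ℕ∞) :
    ⨆ n : ℕ, (((min a n).toNat : ℕ) : ℝ≥0∞) = (a : ℝ≥0∞) := by
  cases a with
  | top =>
    simp only [min_eq_right (le_top : (Nat.cast _ : ℕ∞) ≤ ⊤)]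
    simp [ENNReal.iSup_natCast]
  | coe m =>
    apply le_antisymm
    · refine iSup_le fun n => ?_
      have h1 : min ((m : ℕ∞)) n ≤ (m : ℕ∞) := min_le_left _ _
      have h2 : (min ((m : ℕ∞)) n).toNat ≤ m := by
        have := ENat.toNat_le_toNat h1 (by simp)
        simpa using this
      exact_mod_cast Nat.cast_le.mpr h2
    · calc ((m : ℕ∞) : ℝ≥0∞) = (((min ((m : ℕ∞)) m).toNat : ℕ) : ℝ≥0∞) := by simp
        _ ≤ _ := le_iSup (fun n : ℕ => (((min ((m : ℕ∞)) n).toNat : ℕ) : ℝ≥0∞)) m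

/-- **Upper Additive Drift, Unbounded.** -/
theorem upper_additive_drift_unbounded
    {Ω : Type*} [MeasurableSpace Ω] [StandardBorelSpace Ω]
    (μ : Measure Ω) [IsProbabilityMeasure μ]
    (X : ℕ → Ω → ℝ) (hXmeas : ∀ t, Measurable (X t)) (hXint : ∀ t, Integrable (X t) μ)
    (T : Ω → ℕ∞) (hT : ∀ ω, T ω = hitZero X ω)
    (δ : ℝ) (hδ : 0 < δ)
    (hnonneg : ∀ t : ℕ, ∀ᵐ ω ∂μ, (t : ℕ∞) ≤ T ω → 0 ≤ X t ω)
    (hdrift : ∀ t : ℕ, ∀ᵐ ω ∂μ, (t : ℕ∞) < T ω →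
      δ ≤ X t ω - (μ[X (t + 1) | natSigma X t]) ω) :
    ∀ᵐ ω ∂μ,
      (∫⁻ ω', (T ω' : ℝ≥0∞) ∂(condExpKernel μ (MeasurableSpace.comap (X 0) inferInstance) ω))
        ≤ ENNReal.ofReal (X 0 ω / δ) := by
  classical
  -- basic facts about the filtration
  have hmle : ∀ t, natSigma X t ≤ ‹MeasurableSpace Ω› := fun t =>
    iSup₂_le fun s _ => (hXmeas s).comap_le
  have hmX : ∀ {s t : ℕ}, s ≤ t → Measurable[natSigma X t] (X s) := by
    intro s t hst
    rw [measurable_iff_comap_le]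
    exact le_iSup₂ (f := fun s (_ : s ∈ Finset.range (t + 1)) =>
      MeasurableSpace.comap (X s) inferInstance) s (Finset.mem_range.2 (Nat.lt_succ_of_le hst))
  have hmmono : Monotone (natSigma X) := fun a b hab =>
    biSup_mono fun s hs => Finset.mem_range.2 ((Finset.mem_range.1 hs).trans_le (by omega))
  -- the truncated stopping time
  set τ : ℕ → Ω → ℕ := fun t ω => (min (hitZero X ω) t).toNat with hτdef
  have hτcast : ∀ (t : ℕ) (ω : Ω), (τ t ω : ℕ∞) = min (hitZero X ω) t := fun t ω =>
    ENat.coe_toNat (ne_top_of_le_ne_top (ENat.coe_ne_top t) (min_le_right _ _))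
  have hτle : ∀ t ω, τ t ω ≤ t := by
    intro t ω
    have h : (τ t ω : ℕ∞) ≤ (t : ℕ∞) := by rw [hτcast]; exact min_le_right _ _
    exact_mod_cast h
  have hτmono : ∀ {s t : ℕ} (ω : Ω), s ≤ t → τ s ω ≤ τ t ω := by
    intro s t ω hst
    have h : (τ s ω : ℕ∞) ≤ (τ t ω : ℕ∞) := by
      rw [hτcast, hτcast]
      exact min_le_min le_rfl (by exact_mod_cast hst)
    exact_mod_cast h
  have hτ_eq_of_lt : ∀ (t : ℕ) (ω : Ω), (t : ℕ∞) < hitZero X ω → τ t ω = t := by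
    intro t ω h
    have : (τ t ω : ℕ∞) = (t : ℕ∞) := by rw [hτcast]; exact min_eq_right h.le
    exact_mod_cast this
  have hτsucc_lt : ∀ (t : ℕ) (ω : Ω), (t : ℕ∞) < hitZero X ω → τ (t + 1) ω = t + 1 := by
    intro t ω h
    have h2 : ((t + 1 : ℕ) : ℕ∞) ≤ hitZero X ω := by
      push_cast
      exact (ENat.add_one_le_iff (ENat.coe_ne_top t)).mpr h
    have h3 : (τ (t + 1) ω : ℕ∞) = ((t + 1 : ℕ) : ℕ∞) := by
      rw [hτcast]; exact min_eq_right h2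
    exact_mod_cast h3
  have hτsucc_ge : ∀ (t : ℕ) (ω : Ω), ¬ (t : ℕ∞) < hitZero X ω → τ (t + 1) ω = τ t ω := by
    intro t ω h
    push_neg at h
    have h1 : (τ (t + 1) ω : ℕ∞) = (τ t ω : ℕ∞) := by
      rw [hτcast, hτcast, min_eq_left (h.trans (by exact_mod_cast Nat.le_succ t)),
        min_eq_left h]
    exact_mod_cast h1
  -- the good event and its measurability
  set A : ℕ → Set Ω := fun t => {ω | (t : ℕ∞) < hitZero X ω} with hAdef
  have hA : ∀ t, MeasurableSet[natSigma X t] (A t) := by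
    intro t
    have hset : A t = ⋂ s ∈ Finset.range (t + 1), (X s) ⁻¹' (Set.Ioi 0) := by
      ext ω
      simp only [hAdef, Set.mem_setOf_eq, lt_hitZero_iff, Set.mem_iInter, Set.mem_preimage,
        Set.mem_Ioi, Finset.mem_range, Nat.lt_succ_iff]
    rw [hset]
    exact Finset.measurableSet_biInter _ fun s hs =>
      hmX (Nat.lt_succ_iff.mp (Finset.mem_range.1 hs)) measurableSet_Ioi
  -- measurability of the sets {τ t = s}
  have hB : ∀ {u t : ℕ}, u ≤ t + 1 → MeasurableSet[natSigma X t] {ω | (u : ℕ∞) ≤ hitZero X ω} := by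
    intro u t hut
    have hset : {ω | (u : ℕ∞) ≤ hitZero X ω} = ⋂ s ∈ Finset.range u, (X s) ⁻¹' (Set.Ioi 0) := by
      ext ω
      simp only [Set.mem_setOf_eq, le_hitZero_iff, Set.mem_iInter, Set.mem_preimage,
        Set.mem_Ioi, Finset.mem_range]
    rw [hset]
    exact Finset.measurableSet_biInter _ fun s hs =>
      hmX (by have := Finset.mem_range.1 hs; omega) measurableSet_Ioi
  have hτset : ∀ t s, MeasurableSet[natSigma X t] {ω | τ t ω = s} := by
    intro t s
    rcases lt_trichotomy s t with hst | rfl | hst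
    · have hset : {ω | τ t ω = s} =
          {ω | (s : ℕ∞) ≤ hitZero X ω} \ {ω | ((s + 1 : ℕ) : ℕ∞) ≤ hitZero X ω} := by
        ext ω
        simp only [Set.mem_setOf_eq, Set.mem_diff]
        constructor
        · intro h
          have hc : (s : ℕ∞) = min (hitZero X ω) t := by rw [← hτcast, h]
          constructor
          · rw [hc]; exact min_le_left _ _
          · intro hcon
            have h1 : ((s + 1 : ℕ) : ℕ∞) ≤ min (hitZero X ω) t :=
              le_min hcon (by exact_mod_cast hst)
            rw [← hc] at h1
            have : (s + 1 : ℕ) ≤ s := by exact_mod_cast h1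
            omega
        · rintro ⟨h1, h2⟩
          have hhit : hitZero X ω = (s : ℕ∞) := by
            refine le_antisymm ?_ h1
            by_contra hcon
            push_neg at hcon
            apply h2
            push_cast
            exact ENat.add_one_le_iff (ENat.coe_ne_top s) |>.mpr hcon
          have : (τ t ω : ℕ∞) = (s : ℕ∞) := by
            rw [hτcast, hhit, min_eq_left (by exact_mod_cast hst.le)]
          exact_mod_cast this
      rw [hset]
      exact (hB (by omega)).diff (hB (by omega))
    · have hset : {ω | τ s ω = s} = {ω | (s : ℕ∞) ≤ hitZero X ω} := by
        ext ω
        simp only [Set.mem_setOf_eq]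
        constructor
        · intro h
          have hc : (s : ℕ∞) = min (hitZero X ω) s := by rw [← hτcast, h]
          rw [hc]; exact min_le_left _ _
        · intro h
          have : (τ s ω : ℕ∞) = (s : ℕ∞) := by rw [hτcast]; exact min_eq_right h
          exact_mod_cast this
      rw [hset]
      exact hB (by omega)
    · have hset : {ω | τ t ω = s} = ∅ := by
        apply Set.eq_empty_iff_forall_notMem.mpr
        intro ω h
        have := hτle t ω
        simp only [Set.mem_setOf_eq] at h
        omega
      rw [hset]
      exact @MeasurableSet.empty Ω (natSigma X t)
  have hτmeas : ∀ t, Measurable[natSigma X t] (τ t) := by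
    intro t s _
    have hset : τ t ⁻¹' s = ⋃ n ∈ s, {ω | τ t ω = n} := by
      ext ω
      simp only [Set.mem_preimage, Set.mem_iUnion, Set.mem_setOf_eq]
      exact ⟨fun h => ⟨τ t ω, h, rfl⟩, fun ⟨n, hn, hτn⟩ => hτn ▸ hn⟩
    rw [hset]
    exact MeasurableSet.biUnion s.to_countable (fun n _ => hτset t n)
  -- the supermartingale-like process
  set Y : ℕ → Ω → ℝ := fun t ω => X (τ t ω) ω + δ * τ t ω with hYdef
  have hYsum : ∀ t, Y t = fun ω => ∑ s ∈ Finset.range (t + 1),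
      Set.indicator {ω' | τ t ω' = s} (fun ω' => X s ω' + δ * s) ω := by
    intro t
    funext ω
    rw [Finset.sum_eq_single (τ t ω)]
    · rw [Set.indicator_of_mem (by exact rfl)]
    · intro b _ hb
      exact Set.indicator_of_notMem (fun h => hb ((Set.mem_setOf_eq ▸ h).symm)) _
    · intro h
      exact absurd (Finset.mem_range.2 (Nat.lt_succ_of_le (hτle t ω))) h
  have hYsm : ∀ t, StronglyMeasurable[natSigma X t] (Y t) := by
    intro t
    rw [hYsum t]
    refine Finset.stronglyMeasurable_fun_sum _ fun s hs => ?_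
    exact (((hmX (Nat.lt_succ_iff.mp (Finset.mem_range.1 hs))).add
      measurable_const).stronglyMeasurable).indicator (hτset t s)
  have hYint : ∀ t, Integrable (Y t) μ := by
    intro t
    rw [hYsum t]
    refine integrable_finset_sum _ fun s hs => ?_
    exact (((hXint s).add (integrable_const _))).indicator (hmle t _ (hτset t s))
  -- one-step supermartingale inequality
  have hstep : ∀ t, μ[Y (t + 1) | natSigma X t] ≤ᵐ[μ] Y t := by
    intro t
    have hint1 : Integrable ((A t).indicator (fun ω => X (t + 1) ω + δ * (t + 1))) μ :=
      ((hXint _).add (integrable_const _)).indicator (hmle t _ (hA t))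
    have hint2 : Integrable ((A t)ᶜ.indicator (Y t)) μ :=
      (hYint t).indicator (hmle t _ (hA t).compl)
    have hdecomp : Y (t + 1) = (A t).indicator (fun ω => X (t + 1) ω + δ * (t + 1)) +
        (A t)ᶜ.indicator (Y t) := by
      funext ω
      by_cases hω : ω ∈ A t
      · have h1 : τ (t + 1) ω = t + 1 := hτsucc_lt t ω hω
        simp only [Pi.add_apply, Set.indicator_of_mem hω,
          Set.indicator_of_notMem (by simp [hω] : ω ∉ (A t)ᶜ), hYdef, h1]
        push_cast
        ring
      · have h1 : τ (t + 1) ω = τ t ω := hτsucc_ge t ω hω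
        simp only [Pi.add_apply, Set.indicator_of_notMem hω,
          Set.indicator_of_mem (Set.mem_compl hω), hYdef, h1, zero_add]
    have e0 : μ[Y (t + 1) | natSigma X t] =ᵐ[μ]
        μ[(A t).indicator (fun ω => X (t + 1) ω + δ * (t + 1)) | natSigma X t] +
        μ[(A t)ᶜ.indicator (Y t) | natSigma X t] := by
      rw [hdecomp]
      exact condExp_add hint1 hint2 _
    have e1 : μ[(A t).indicator (fun ω => X (t + 1) ω + δ * (t + 1)) | natSigma X t] =ᵐ[μ]
        (A t).indicator (μ[fun ω => X (t + 1) ω + δ * (t + 1) | natSigma X t]) :=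
      condExp_indicator ((hXint _).add (integrable_const _)) (hA t)
    have e1' : μ[fun ω => X (t + 1) ω + δ * (t + 1) | natSigma X t] =ᵐ[μ]
        μ[X (t + 1) | natSigma X t] + fun _ => δ * (t + 1) := by
      have hfg : (fun ω => X (t + 1) ω + δ * ((t : ℝ) + 1)) =
          X (t + 1) + fun _ => δ * ((t : ℝ) + 1) := rfl
      rw [hfg]
      refine (condExp_add (hXint _) (integrable_const _) _).trans ?_
      rw [condExp_const (hmle t)]
    have e2 : μ[(A t)ᶜ.indicator (Y t) | natSigma X t] = (A t)ᶜ.indicator (Y t) :=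
      condExp_of_stronglyMeasurable (hmle t) ((hYsm t).indicator (hA t).compl) hint2
    have hdr : ∀ᵐ ω ∂μ, ω ∈ A t → (μ[X (t + 1) | natSigma X t]) ω ≤ X t ω - δ := by
      filter_upwards [hdrift t] with ω h hmem
      have := h (by rw [hT]; exact hmem)
      linarith
    filter_upwards [e0, e1, e1', hdr] with ω h0 h1 h1' hdrω
    rw [h0, Pi.add_apply, e2, h1]
    by_cases hω : ω ∈ A t
    · rw [Set.indicator_of_mem hω, Set.indicator_of_notMem (by simp [hω])]
      have hτt : τ t ω = t := hτ_eq_of_lt t ω hω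
      have h2 := hdrω hω
      have h3 : (μ[fun ω => X (t + 1) ω + δ * (t + 1) | natSigma X t]) ω =
          (μ[X (t + 1) | natSigma X t]) ω + δ * (t + 1) := by rw [h1']; rfl
      rw [h3]
      simp only [hYdef, hτt, add_zero]
      linarith
    · rw [Set.indicator_of_notMem hω, Set.indicator_of_mem (Set.mem_compl hω), zero_add]
  -- tower property down to time 0
  have htower : ∀ n, μ[Y n | natSigma X 0] ≤ᵐ[μ] X 0 := by
    intro n
    induction n with
    | zero =>
      have hY0 : Y 0 = X 0 := by
        funext ω
        have h0 : τ 0 ω = 0 := Nat.le_zero.mp (hτle 0 ω)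
        simp [hYdef, h0]
      rw [hY0, condExp_of_stronglyMeasurable (hmle 0)
        ((hmX le_rfl).stronglyMeasurable) (hXint 0)]
    | succ n ih =>
      have h1 : μ[μ[Y (n + 1) | natSigma X n] | natSigma X 0] =ᵐ[μ]
          μ[Y (n + 1) | natSigma X 0] :=
        condExp_condExp_of_le (hmmono (Nat.zero_le n)) (hmle n)
      have h2 : μ[μ[Y (n + 1) | natSigma X n] | natSigma X 0] ≤ᵐ[μ] μ[Y n | natSigma X 0] :=
        condExp_mono integrable_condExp (hYint n) (hstep n)
      exact (h1.symm.le.trans h2).trans ih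
  -- the real-valued truncated time and its conditional bound
  set g : ℕ → Ω → ℝ := fun n ω => (τ n ω : ℝ) with hgdef
  have hτmeasA : ∀ n, Measurable (τ n) := fun n => (hτmeas n).mono (hmle n) le_rfl
  have hgmeas : ∀ n, Measurable (g n) := fun n => measurable_from_top.comp (hτmeasA n)
  have hgint : ∀ n, Integrable (g n) μ := by
    intro n
    refine Integrable.mono' (integrable_const (n : ℝ)) (hgmeas n).aestronglyMeasurable ?_
    refine ae_of_all _ fun ω => ?_
    rw [Real.norm_eq_abs, abs_of_nonneg (by simp [hgdef] : (0:ℝ) ≤ g n ω)]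
    simp only [hgdef]
    exact_mod_cast hτle n ω
  have hτnn : ∀ n, ∀ᵐ ω ∂μ, 0 ≤ X (τ n ω) ω := by
    intro n
    filter_upwards [ae_all_iff.2 hnonneg] with ω hω
    exact hω (τ n ω) (by rw [hT, hτcast]; exact min_le_left _ _)
  have hgbound : ∀ n, ∀ᵐ ω ∂μ, (μ[g n | natSigma X 0]) ω ≤ X 0 ω / δ := by
    intro n
    have hkey : (δ • g n) ≤ᵐ[μ] Y n := by
      filter_upwards [hτnn n] with ω hω
      simp only [Pi.smul_apply, smul_eq_mul, hYdef, hgdef]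
      linarith
    have h1 : μ[δ • g n | natSigma X 0] ≤ᵐ[μ] μ[Y n | natSigma X 0] :=
      condExp_mono ((hgint n).smul δ) (hYint n) hkey
    have h2 : μ[δ • g n | natSigma X 0] =ᵐ[μ] δ • μ[g n | natSigma X 0] :=
      condExp_smul δ (g n) _
    filter_upwards [h1, h2, htower n] with ω hω1 hω2 hω3
    have h3 : δ * (μ[g n | natSigma X 0]) ω ≤ X 0 ω := by
      have h4 : (δ • μ[g n | natSigma X 0]) ω ≤ (μ[Y n | natSigma X 0]) ω := hω2 ▸ hω1
      simp only [Pi.smul_apply, smul_eq_mul] at h4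
      exact h4.trans hω3
    rw [le_div_iff₀ hδ]
    linarith
  -- pass to the conditional expectation kernel
  have hm0eq : natSigma X 0 = MeasurableSpace.comap (X 0) inferInstance := by
    simp [natSigma]
  rw [← hm0eq]
  have hker : ∀ n, μ[g n | natSigma X 0] =ᵐ[μ]
      fun ω => ∫ y, g n y ∂(condExpKernel μ (natSigma X 0) ω) := fun n =>
    condExp_ae_eq_integral_condExpKernel (hmle 0) (hgint n)
  filter_upwards [ae_all_iff.2 hgbound, ae_all_iff.2 hker] with ω hb hk
  set κ := condExpKernel μ (natSigma X 0) ω with hκ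
  have hmeasn : ∀ n : ℕ, Measurable fun ω' => ((τ n ω' : ℕ) : ℝ≥0∞) :=
    fun n => measurable_from_top.comp (hτmeasA n)
  have hint : ∀ n : ℕ, Integrable (g n) κ := by
    intro n
    refine Integrable.mono' (integrable_const (n : ℝ)) (hgmeas n).aestronglyMeasurable ?_
    refine ae_of_all _ fun ω' => ?_
    rw [Real.norm_eq_abs, abs_of_nonneg (by simp [hgdef] : (0:ℝ) ≤ g n ω')]
    simp only [hgdef]
    exact_mod_cast hτle n ω'
  calc ∫⁻ ω', (T ω' : ℝ≥0∞) ∂κ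
      = ∫⁻ ω', ⨆ n : ℕ, ((τ n ω' : ℕ) : ℝ≥0∞) ∂κ := by
        refine lintegral_congr fun ω' => ?_
        rw [hT]
        simp only [hτdef]
        exact (iSup_min_toNat_toENNReal _).symm
    _ = ⨆ n : ℕ, ∫⁻ ω', ((τ n ω' : ℕ) : ℝ≥0∞) ∂κ :=
        lintegral_iSup hmeasn
          (fun a b hab ω' => by exact_mod_cast Nat.cast_le.mpr (hτmono ω' hab))
    _ = ⨆ n : ℕ, ENNReal.ofReal (∫ ω', g n ω' ∂κ) := by
        refine iSup_congr fun n => ?_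
        rw [ofReal_integral_eq_lintegral_ofReal (hint n)
          (ae_of_all _ fun ω' => by simp [hgdef])]
        refine lintegral_congr fun ω' => ?_
        simp [hgdef, ENNReal.ofReal_natCast]
    _ = ⨆ n : ℕ, ENNReal.ofReal ((μ[g n | natSigma X 0]) ω) := by
        refine iSup_congr fun n => ?_
        rw [hk n]
    _ ≤ ENNReal.ofReal (X 0 ω / δ) := iSup_le fun n => ENNReal.ofReal_le_ofReal (hb n)
end

section
/- Let (X_t) be a random process over the reals, let x_min > 0, and let T = inf{t : X_t < x_min}. Let D be the smallest real interval containing all values x ≥ x_min that X_t can take for t ≤ T. Suppose (a) X_0 ≥ x_min and X_t ≥ 0 for all t ≤ T, and (b) there is a monotonically increasing function h : D → ℝ_{>0} such that X_t − E[X_{t+1} | X_0,…,X_t] ≥ h(X_t) for all t < T. Then E[T | X_0] ≤ x_min/h(x_min) + ∫_{x_min}^{X_0} dz/h(z). -/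
open MeasureTheory ProbabilityTheory Filter
open scoped ENNReal NNReal

section Filtr
variable {Ω : Type*} [mΩ : MeasurableSpace Ω] {X : ℕ → Ω → ℝ}

lemma natSigma_le (hXmeas : ∀ t, Measurable (X t)) (t : ℕ) : natSigma X t ≤ mΩ := by
  refine iSup₂_le fun s _ => ?_
  exact measurable_iff_comap_le.mp (hXmeas s)

lemma natSigma_mono {s t : ℕ} (hst : s ≤ t) : natSigma X s ≤ natSigma X t := by
  refine iSup₂_le fun i hi => ?_
  refine le_iSup₂ (f := fun i (_ : i ∈ Finset.range (t+1)) => MeasurableSpace.comap (X i) inferInstance) i ?_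
  exact Finset.mem_range.mpr (lt_of_lt_of_le (Finset.mem_range.mp hi) (by omega))

lemma measurable_natSigma {s t : ℕ} (hst : s ≤ t) : Measurable[natSigma X t] (X s) := by
  refine measurable_iff_comap_le.mpr ?_
  refine le_trans ?_ (natSigma_mono hst)
  exact le_iSup₂ (f := fun i (_ : i ∈ Finset.range (s+1)) => MeasurableSpace.comap (X i) inferInstance) s (Finset.mem_range.mpr (by omega))

lemma natSigma_zero : natSigma X 0 = MeasurableSpace.comap (X 0) inferInstance := by
  rw [natSigma]
  simp

end Filtr

-- counting lemma
lemma min_toNat_eq_sum (n : ℕ) (a : ℕ∞) :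
    (((min (n:ℕ∞) a).toNat : ℝ)) = ∑ s ∈ Finset.range n, if (s:ℕ∞) < a then (1:ℝ) else 0 := by
  induction n with
  | zero => simp
  | succ n ih =>
    rw [Finset.sum_range_succ, ← ih]
    by_cases hn : (n:ℕ∞) < a
    · have h1 : min (n:ℕ∞) a = n := min_eq_left hn.le
      have h2 : min ((n+1:ℕ):ℕ∞) a = ((n+1:ℕ):ℕ∞) := by
        refine min_eq_left ?_
        exact ENat.add_one_le_iff (ENat.coe_ne_top n) |>.mpr (by exact_mod_cast hn)
      rw [if_pos hn, h1, h2, ENat.toNat_coe, ENat.toNat_coe]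
      push_cast
      ring
    · have ha : a ≤ (n:ℕ∞) := not_lt.mp hn
      have h1 : min (n:ℕ∞) a = a := min_eq_right ha
      have h2 : min ((n+1:ℕ):ℕ∞) a = a := min_eq_right (ha.trans (by exact_mod_cast Nat.le_succ n))
      rw [if_neg hn, h1, h2, add_zero]

-- T characterization
lemma le_T_iff {Ω : Type*} (X : ℕ → Ω → ℝ) (xmin : ℝ) (T : Ω → ℕ∞)
    (hT : ∀ ω, T ω = sInf ((fun n : ℕ => (n : ℕ∞)) '' {t : ℕ | X t ω < xmin}))
    (ω : Ω) (t : ℕ) : (t:ℕ∞) ≤ T ω ↔ ∀ s, s < t → xmin ≤ X s ω := by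
  rw [hT, le_sInf_iff]
  constructor
  · intro H s hst
    by_contra hcon
    have := H (s:ℕ∞) ⟨s, not_le.mp hcon, rfl⟩
    exact absurd (Nat.cast_le.mp this) (not_le.mpr hst)
  · rintro H b ⟨s, hs, rfl⟩
    by_contra hcon
    exact absurd (H s (Nat.cast_lt.mp (not_le.mp hcon))) (not_le.mpr hs)

lemma lt_T_iff {Ω : Type*} (X : ℕ → Ω → ℝ) (xmin : ℝ) (T : Ω → ℕ∞)
    (hT : ∀ ω, T ω = sInf ((fun n : ℕ => (n : ℕ∞)) '' {t : ℕ | X t ω < xmin}))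
    (ω : Ω) (t : ℕ) : (t:ℕ∞) < T ω ↔ ∀ s, s ≤ t → xmin ≤ X s ω := by
  have : (t:ℕ∞) < T ω ↔ ((t+1:ℕ):ℕ∞) ≤ T ω := by
    rw [show ((t+1:ℕ):ℕ∞) = (t:ℕ∞) + 1 by push_cast; rfl]
    exact (ENat.add_one_le_iff (ENat.coe_ne_top t)).symm
  rw [this, le_T_iff X xmin T hT]
  constructor
  · exact fun H s hs => H s (by omega)
  · exact fun H s hs => H s (by omega)

-- T = t characterization
lemma T_eq_iff {Ω : Type*} (X : ℕ → Ω → ℝ) (xmin : ℝ) (T : Ω → ℕ∞)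
    (hT : ∀ ω, T ω = sInf ((fun n : ℕ => (n : ℕ∞)) '' {t : ℕ | X t ω < xmin}))
    (ω : Ω) (t : ℕ) : T ω = (t:ℕ∞) ↔ ((∀ s, s < t → xmin ≤ X s ω) ∧ X t ω < xmin) := by
  constructor
  · intro H
    constructor
    · exact (le_T_iff X xmin T hT ω t).mp H.ge
    · by_contra hcon
      have : (t:ℕ∞) < T ω := by
        rw [lt_T_iff X xmin T hT]
        intro s hs
        rcases lt_or_eq_of_le hs with hs' | rfl
        · exact (le_T_iff X xmin T hT ω t).mp H.ge s hs'
        · exact not_lt.mp hcon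
      simp [H] at this
  · rintro ⟨H1, H2⟩
    refine le_antisymm ?_ ((le_T_iff X xmin T hT ω t).mpr H1)
    rw [hT]
    exact sInf_le ⟨t, H2, rfl⟩

lemma iSup_ofReal_min_toNat (a : ℕ∞) :
    ⨆ n : ℕ, ENNReal.ofReal (((min (n:ℕ∞) a).toNat : ℝ)) = (a : ℝ≥0∞) := by
  cases a using ENat.recTopCoe with
  | top =>
    simp only [min_eq_left (le_top : (_:ℕ∞) ≤ ⊤), ENat.toNat_coe, ENat.toENNReal_top]
    simp only [ENNReal.ofReal_natCast]
    exact ENNReal.iSup_natCast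
  | coe m =>
    refine le_antisymm (iSup_le fun n => ?_) (le_iSup_of_le m ?_)
    · have : ((min (n:ℕ∞) (m:ℕ∞)).toNat : ℝ) ≤ (m:ℝ) := by
        have : (min (n:ℕ∞) (m:ℕ∞)).toNat ≤ m := by
          have : min (n:ℕ∞) (m:ℕ∞) = ((min n m : ℕ) : ℕ∞) := by
            rcases le_total n m with hc | hc <;>
              simp [min_eq_left, min_eq_right, hc, Nat.cast_le (α := ℕ∞), *]
          rw [this, ENat.toNat_coe]
          omega
        exact_mod_cast this
      calc ENNReal.ofReal (((min (n:ℕ∞) (m:ℕ∞)).toNat : ℝ)) ≤ ENNReal.ofReal (m:ℝ) :=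
            ENNReal.ofReal_le_ofReal this
        _ = ((m:ℕ∞) : ℝ≥0∞) := by simp
    · simp

noncomputable def driftK (h : ℝ → ℝ) (D : Set ℝ) (xmin : ℝ) (z : ℝ) : ℝ :=
  sInf (((fun y => (h y)⁻¹) '' (D ∩ Set.Icc xmin z)) ∪ {(h xmin)⁻¹})

section DriftK
variable {h : ℝ → ℝ} {D : Set ℝ} {xmin : ℝ}
variable (hmono : MonotoneOn h D) (hpos : ∀ x ∈ D, 0 < h x) (hxminD : xmin ∈ D)

lemma driftK_set_nonempty (z : ℝ) :
    (((fun y => (h y)⁻¹) '' (D ∩ Set.Icc xmin z)) ∪ {(h xmin)⁻¹}).Nonempty :=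
  ⟨(h xmin)⁻¹, Set.mem_union_right _ rfl⟩

include hpos hxminD in
lemma driftK_lb (z : ℝ) :
    ∀ w ∈ ((fun y => (h y)⁻¹) '' (D ∩ Set.Icc xmin z)) ∪ {(h xmin)⁻¹}, 0 ≤ w := by
  rintro w (⟨y, ⟨hyD, _⟩, rfl⟩ | rfl)
  · exact le_of_lt (inv_pos.mpr (hpos y hyD))
  · exact le_of_lt (inv_pos.mpr (hpos xmin hxminD))

include hpos hxminD in
lemma driftK_nonneg (z : ℝ) : 0 ≤ driftK h D xmin z :=
  le_csInf (driftK_set_nonempty z) (driftK_lb hpos hxminD z)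

include hpos hxminD in
lemma driftK_bddBelow (z : ℝ) :
    BddBelow (((fun y => (h y)⁻¹) '' (D ∩ Set.Icc xmin z)) ∪ {(h xmin)⁻¹}) :=
  ⟨0, driftK_lb hpos hxminD z⟩

include hpos hxminD in
lemma driftK_le (z : ℝ) : driftK h D xmin z ≤ (h xmin)⁻¹ :=
  csInf_le (driftK_bddBelow hpos hxminD z) (Set.mem_union_right _ rfl)

include hpos hxminD in
lemma driftK_antitone : Antitone (driftK h D xmin) := by
  intro z₁ z₂ h12
  exact csInf_le_csInf (driftK_bddBelow hpos hxminD z₂) (driftK_set_nonempty z₁)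
    (Set.union_subset_union_left _
      (Set.image_mono (Set.inter_subset_inter_right _ (Set.Icc_subset_Icc_right h12))))

include hmono hpos hxminD in
lemma driftK_eq {z : ℝ} (hzD : z ∈ D) (hz : xmin ≤ z) : driftK h D xmin z = (h z)⁻¹ := by
  refine le_antisymm (csInf_le (driftK_bddBelow hpos hxminD z)
    (Set.mem_union_left _ ⟨z, ⟨hzD, hz, le_rfl⟩, rfl⟩)) ?_
  refine le_csInf (driftK_set_nonempty z) ?_
  rintro w (⟨y, ⟨hyD, _, hyz⟩, rfl⟩ | rfl)
  · exact inv_anti₀ (hpos y hyD) (hmono hyD hzD hyz)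
  · exact inv_anti₀ (hpos xmin hxminD) (hmono hxminD hzD hz)

end DriftK

noncomputable def driftG (h : ℝ → ℝ) (D : Set ℝ) (xmin : ℝ) (x : ℝ) : ℝ :=
  xmin / h xmin + ∫ z in xmin..x, driftK h D xmin z

section DriftG
variable {h : ℝ → ℝ} {D : Set ℝ} {xmin : ℝ}
variable (hmono : MonotoneOn h D) (hpos : ∀ x ∈ D, 0 < h x) (hxminD : xmin ∈ D)
  (hxmin : 0 < xmin)

include hpos hxminD in
lemma driftK_intervalIntegrable (a b : ℝ) :
    IntervalIntegrable (driftK h D xmin) volume a b :=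
  (driftK_antitone hpos hxminD).intervalIntegrable

include hpos hxminD in
lemma driftG_sub (x y : ℝ) :
    driftG h D xmin y - driftG h D xmin x = ∫ z in x..y, driftK h D xmin z := by
  simp only [driftG, add_sub_add_left_eq_sub]
  rw [← intervalIntegral.integral_add_adjacent_intervals
    (driftK_intervalIntegrable hpos hxminD xmin x) (driftK_intervalIntegrable hpos hxminD x y)]
  ring

include hpos hxminD in
lemma driftG_key (x y : ℝ) :
    driftG h D xmin y ≤ driftG h D xmin x + (y - x) * driftK h D xmin x := by
  have hsub := driftG_sub hpos hxminD (xmin := xmin) x y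
  have : (∫ z in x..y, driftK h D xmin z) ≤ (y - x) * driftK h D xmin x := by
    rcases le_total x y with hxy | hxy
    · calc (∫ z in x..y, driftK h D xmin z) ≤ ∫ _ in x..y, driftK h D xmin x := by
            refine intervalIntegral.integral_mono_on hxy
              (driftK_intervalIntegrable hpos hxminD x y) intervalIntegrable_const ?_
            exact fun z hz => driftK_antitone hpos hxminD hz.1
        _ = (y - x) * driftK h D xmin x := by simp [mul_comm]
    · rw [intervalIntegral.integral_symm]
      have : ((x - y) * driftK h D xmin x) ≤ ∫ z in y..x, driftK h D xmin z := by
        calc ((x - y) * driftK h D xmin x) = ∫ _ in y..x, driftK h D xmin x := by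
              simp [mul_comm]
          _ ≤ ∫ z in y..x, driftK h D xmin z := by
              refine intervalIntegral.integral_mono_on hxy intervalIntegrable_const
                (driftK_intervalIntegrable hpos hxminD y x) ?_
              exact fun z hz => driftK_antitone hpos hxminD hz.2
      linarith
  linarith

include hpos hxminD in
lemma driftG_lipschitz (x y : ℝ) :
    |driftG h D xmin y - driftG h D xmin x| ≤ (h xmin)⁻¹ * |y - x| := by
  rw [driftG_sub hpos hxminD]
  have := intervalIntegral.norm_integral_le_of_norm_le_const (C := (h xmin)⁻¹)
    (f := driftK h D xmin) (a := x) (b := y) ?_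
  · simpa [Real.norm_eq_abs, mul_comm] using this
  · intro z _
    rw [Real.norm_eq_abs, abs_of_nonneg (driftK_nonneg hpos hxminD z)]
    exact driftK_le hpos hxminD z

include hpos hxminD in
lemma driftG_continuous : Continuous (driftG h D xmin) := by
  have h0 : 0 < h xmin := hpos xmin hxminD
  refine (LipschitzWith.of_dist_le_mul (K := ⟨(h xmin)⁻¹, le_of_lt (inv_pos.mpr h0)⟩)
    (f := driftG h D xmin) ?_).continuous
  intro x y
  rw [Real.dist_eq, Real.dist_eq]
  exact (by simpa [abs_sub_comm] using driftG_lipschitz hpos hxminD y x :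
    |driftG h D xmin x - driftG h D xmin y| ≤ (h xmin)⁻¹ * |x - y|)

include hpos hxminD hxmin in
lemma driftG_nonneg {x : ℝ} (hx : 0 ≤ x) : 0 ≤ driftG h D xmin x := by
  have h0 : 0 < h xmin := hpos xmin hxminD
  have hGxmin : driftG h D xmin xmin = xmin / h xmin := by simp [driftG]
  rcases le_total xmin x with hcase | hcase
  · have := driftG_sub hpos hxminD (xmin := xmin) xmin x
    have hint : 0 ≤ ∫ z in xmin..x, driftK h D xmin z :=
      intervalIntegral.integral_nonneg hcase fun z _ => driftK_nonneg hpos hxminD z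
    have : 0 ≤ xmin / h xmin := le_of_lt (div_pos hxmin h0)
    nlinarith [driftG_sub hpos hxminD (xmin := xmin) xmin x]
  · have hsub := driftG_sub hpos hxminD (xmin := xmin) xmin x
    have hbound : (∫ z in xmin..x, driftK h D xmin z) ≥ (x - xmin) * (h xmin)⁻¹ := by
      have := driftG_key hpos hxminD (xmin := xmin) xmin x
      -- direct: integral from xmin to x with x ≤ xmin
      rw [intervalIntegral.integral_symm]
      have : (∫ z in x..xmin, driftK h D xmin z) ≤ (xmin - x) * (h xmin)⁻¹ := by
        calc (∫ z in x..xmin, driftK h D xmin z) ≤ ∫ _ in x..xmin, (h xmin)⁻¹ := by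
              refine intervalIntegral.integral_mono_on hcase
                (driftK_intervalIntegrable hpos hxminD x xmin) intervalIntegrable_const ?_
              exact fun z _ => driftK_le hpos hxminD z
          _ = (xmin - x) * (h xmin)⁻¹ := by simp [mul_comm]
      linarith
    have : xmin / h xmin = xmin * (h xmin)⁻¹ := div_eq_mul_inv _ _
    nlinarith [mul_nonneg hx (le_of_lt (inv_pos.mpr h0))]

end DriftG

/-- **Upper Variable Drift, Unbounded, Below Target.** -/
theorem upper_variable_drift_unbounded_below_target
    {Ω : Type*} [MeasurableSpace Ω] [StandardBorelSpace Ω]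
    (μ : Measure Ω) [IsProbabilityMeasure μ]
    (X : ℕ → Ω → ℝ) (hXmeas : ∀ t, Measurable (X t)) (hXint : ∀ t, Integrable (X t) μ)
    (xmin : ℝ) (hxmin : 0 < xmin)
    (T : Ω → ℕ∞)
    (hT : ∀ ω, T ω = sInf ((fun n : ℕ => (n : ℕ∞)) '' {t : ℕ | X t ω < xmin}))
    -- `D` is a real interval containing `xmin` and all values `x ≥ xmin` the process
    -- can take up to time `T`
    (D : Set ℝ) (hDconn : D.OrdConnected) (hxminD : xmin ∈ D)
    (hDmem : ∀ t : ℕ, ∀ ω, (t : ℕ∞) ≤ T ω → xmin ≤ X t ω → X t ω ∈ D)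
    (h : ℝ → ℝ) (hmono : MonotoneOn h D) (hpos : ∀ x ∈ D, 0 < h x)
    (hstart : ∀ᵐ ω ∂μ, xmin ≤ X 0 ω)
    (hnonneg : ∀ t : ℕ, ∀ᵐ ω ∂μ, (t : ℕ∞) ≤ T ω → 0 ≤ X t ω)
    (hdrift : ∀ t : ℕ, ∀ᵐ ω ∂μ, (t : ℕ∞) < T ω →
      h (X t ω) ≤ X t ω - (μ[X (t + 1) | natSigma X t]) ω) :
    ∀ᵐ ω ∂μ,
      (∫⁻ ω', (T ω' : ℝ≥0∞) ∂(condExpKernel μ (MeasurableSpace.comap (X 0) inferInstance) ω))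
        ≤ ENNReal.ofReal (xmin / h xmin + ∫ z in xmin..(X 0 ω), 1 / h z) := by
  have h0 : 0 < h xmin := hpos xmin hxminD
  set k : ℝ → ℝ := driftK h D xmin with hk_def
  set g : ℝ → ℝ := driftG h D xmin with hg_def
  have hg_cont : Continuous g := driftG_continuous hpos hxminD
  -- integrability of g ∘ X t
  have hgX_int : ∀ t, Integrable (fun ω => g (X t ω)) μ := by
    intro t
    refine Integrable.mono' (g := fun ω => |g 0| + (h xmin)⁻¹ * |X t ω|)
      (integrable_const _ |>.add ((hXint t).abs.const_mul _))
      ((hg_cont.measurable.comp (hXmeas t)).aestronglyMeasurable) ?_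
    refine ae_of_all _ fun ω => ?_
    have := driftG_lipschitz hpos hxminD (xmin := xmin) 0 (X t ω)
    rw [Real.norm_eq_abs]
    calc |g (X t ω)| ≤ |g 0| + |g (X t ω) - g 0| := by
          have := abs_add_le (g 0) (g (X t ω) - g 0); simpa using this
      _ ≤ |g 0| + (h xmin)⁻¹ * |X t ω| := by
          refine add_le_add (le_refl _) ?_
          simpa using this
  -- events
  set A : ℕ → Set Ω := fun t => {ω | (t:ℕ∞) < T ω} with hA_def
  set B : ℕ → Set Ω := fun t => {ω | (t:ℕ∞) ≤ T ω} with hB_def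
  have hA_eq : ∀ t, A t = ⋂ s ∈ Finset.range (t+1), X s ⁻¹' Set.Ici xmin := by
    intro t
    ext ω
    simp only [hA_def, Set.mem_setOf_eq, Set.mem_iInter, Set.mem_preimage, Set.mem_Ici,
      Finset.mem_range, lt_T_iff X xmin T hT]
    exact ⟨fun H s hs => H s (by omega), fun H s hs => H s (by omega)⟩
  have hB_eq : ∀ t, B t = ⋂ s ∈ Finset.range t, X s ⁻¹' Set.Ici xmin := by
    intro t
    ext ω
    simp only [hB_def, Set.mem_setOf_eq, Set.mem_iInter, Set.mem_preimage, Set.mem_Ici,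
      Finset.mem_range, le_T_iff X xmin T hT]
  have hTeq_eq : ∀ t : ℕ, {ω | T ω = (t:ℕ∞)}
      = (⋂ s ∈ Finset.range t, X s ⁻¹' Set.Ici xmin) ∩ X t ⁻¹' Set.Iio xmin := by
    intro t
    ext ω
    simp only [Set.mem_setOf_eq, Set.mem_inter_iff, Set.mem_iInter, Set.mem_preimage,
      Set.mem_Ici, Set.mem_Iio, Finset.mem_range, T_eq_iff X xmin T hT]
  -- measurability of events
  have hA_measF : ∀ t, MeasurableSet[natSigma X t] (A t) := by
    intro t
    rw [hA_eq]
    refine MeasurableSet.biInter (Set.to_countable _) fun s hs => ?_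
    exact measurable_natSigma (by simpa using Nat.lt_succ_iff.mp (Finset.mem_range.mp hs))
      measurableSet_Ici
  have hA_meas : ∀ t, MeasurableSet (A t) := fun t =>
    natSigma_le hXmeas t _ (hA_measF t)
  have hB_measF : ∀ t n, t ≤ n + 1 → MeasurableSet[natSigma X n] (B t) := by
    intro t n htn
    rw [hB_eq]
    refine MeasurableSet.biInter (Set.to_countable _) fun s hs => ?_
    exact measurable_natSigma (by have := Finset.mem_range.mp hs; omega) measurableSet_Ici
  have hB_meas : ∀ t, MeasurableSet (B t) := fun t =>
    natSigma_le hXmeas t _ (hB_measF t t (by omega))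
  have hTeq_measF : ∀ t n, t ≤ n → MeasurableSet[natSigma X n] {ω | T ω = (t:ℕ∞)} := by
    intro t n htn
    rw [hTeq_eq]
    refine MeasurableSet.inter ?_ (measurable_natSigma htn measurableSet_Iio)
    refine MeasurableSet.biInter (Set.to_countable _) fun s hs => ?_
    exact measurable_natSigma (by have := Finset.mem_range.mp hs; omega) measurableSet_Ici
  have hTeq_meas : ∀ t : ℕ, MeasurableSet {ω | T ω = (t:ℕ∞)} := fun t =>
    natSigma_le hXmeas t _ (hTeq_measF t t le_rfl)
  -- the stopped time as natural number
  set N : ℕ → Ω → ℕ := fun n ω => (min (n:ℕ∞) (T ω)).toNat with hN_def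
  have hN_coe : ∀ n ω, ((N n ω : ℕ∞)) = min (n:ℕ∞) (T ω) := by
    intro n ω
    refine ENat.coe_toNat ?_
    exact ne_top_of_le_ne_top (ENat.coe_ne_top n) (min_le_left _ _)
  have hN_le_T : ∀ n ω, ((N n ω : ℕ∞)) ≤ T ω := fun n ω => (hN_coe n ω).le.trans (min_le_right _ _)
  have hN_le : ∀ n ω, N n ω ≤ n := by
    intro n ω
    have : ((N n ω : ℕ∞)) ≤ (n:ℕ∞) := (hN_coe n ω).le.trans (min_le_left _ _)
    exact_mod_cast this
  have hN_of_lt : ∀ (n : ℕ) ω, (n:ℕ∞) ≤ T ω → N n ω = n := by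
    intro n ω hlt
    have : min (n:ℕ∞) (T ω) = (n:ℕ∞) := min_eq_left hlt
    simp [hN_def, this]
  have hN_of_ge : ∀ (n : ℕ) ω, T ω ≤ (n:ℕ∞) → ((N n ω : ℕ∞)) = T ω := by
    intro n ω hle
    rw [hN_coe n ω, min_eq_right hle]
  have hN_sum : ∀ (n : ℕ) ω, ((N n ω : ℝ)) = ∑ s ∈ Finset.range n, if (s:ℕ∞) < T ω then (1:ℝ) else 0 :=
    fun n ω => min_toNat_eq_sum n (T ω)
  have hN_meas : ∀ n, Measurable (fun ω => (N n ω : ℝ)) := by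
    intro n
    have : (fun ω => (N n ω : ℝ))
        = fun ω => ∑ s ∈ Finset.range n, (A s).indicator (fun _ => (1:ℝ)) ω := by
      funext ω
      rw [hN_sum n ω]
      refine Finset.sum_congr rfl fun s _ => ?_
      by_cases hc : (s:ℕ∞) < T ω
      · rw [if_pos hc, Set.indicator_of_mem (by exact hc)]
      · rw [if_neg hc, Set.indicator_of_notMem (by exact hc)]
    rw [this]
    exact Finset.measurable_sum _ fun s _ => (measurable_const.indicator (hA_meas s))
  have hN_int : ∀ n, Integrable (fun ω => (N n ω : ℝ)) μ := by
    intro n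
    refine Integrable.mono' (integrable_const (n:ℝ)) (hN_meas n).aestronglyMeasurable ?_
    refine ae_of_all _ fun ω => ?_
    rw [Real.norm_eq_abs, abs_of_nonneg (by positivity)]
    exact_mod_cast hN_le n ω
  have hN_mono : ∀ ω ⦃n m : ℕ⦄, n ≤ m → N n ω ≤ N m ω := by
    intro ω n m hnm
    have : ((N n ω : ℝ)) ≤ ((N m ω : ℝ)) := by
      rw [hN_sum, hN_sum]
      refine Finset.sum_le_sum_of_subset_of_nonneg (Finset.range_subset_range.mpr hnm) ?_
      intro s _ _
      positivity
    exact_mod_cast this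
  -- the supermartingale-like process
  set Z : ℕ → Ω → ℝ := fun n ω => g (X (N n ω) ω) + (N n ω : ℝ) with hZ_def
  have hZ_sum : ∀ n, Z n = fun ω =>
      (∑ s ∈ Finset.range n, ({ω' | T ω' = (s:ℕ∞)}.indicator (fun ω' => g (X s ω') + s) ω))
      + (B n).indicator (fun ω' => g (X n ω') + n) ω := by
    intro n
    funext ω
    by_cases hc : (n:ℕ∞) ≤ T ω
    · have hNn : N n ω = n := hN_of_lt n ω hc
      have hsum : ∀ s ∈ Finset.range n,
          ({ω' | T ω' = (s:ℕ∞)}.indicator (fun ω' => g (X s ω') + s) ω) = 0 := by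
        intro s hs
        refine Set.indicator_of_notMem ?_ _
        intro hmem
        rw [Set.mem_setOf_eq] at hmem
        rw [hmem] at hc
        exact absurd (Nat.cast_le.mp hc) (by simpa using Finset.mem_range.mp hs)
      rw [Finset.sum_eq_zero hsum, Set.indicator_of_mem (by exact hc), hZ_def]
      simp [hNn]
    · push_neg at hc
      have hne : T ω ≠ ⊤ := ne_top_of_le_ne_top (ENat.coe_ne_top n) hc.le
      obtain ⟨s₀', hs₀'⟩ := WithTop.ne_top_iff_exists.mp hne
      have hs₀ : T ω = ((s₀':ℕ):ℕ∞) := by exact_mod_cast hs₀'.symm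
      set s₀ : ℕ := s₀'
      have hs₀n : s₀ < n := by
        have : (s₀:ℕ∞) < (n:ℕ∞) := by rw [← hs₀]; exact hc
        exact_mod_cast this
      have hNn : ((N n ω : ℕ∞)) = (s₀ : ℕ∞) := by rw [hN_of_ge n ω hc.le, hs₀]
      have hNn' : N n ω = s₀ := by exact_mod_cast hNn
      have hBn : ω ∉ B n := by
        intro hmem
        rw [hB_def, Set.mem_setOf_eq] at hmem
        exact absurd hmem (not_le.mpr hc)
      rw [Set.indicator_of_notMem hBn, add_zero]
      rw [Finset.sum_eq_single_of_mem s₀ (Finset.mem_range.mpr hs₀n)]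
      · rw [Set.indicator_of_mem (show ω ∈ {ω' | T ω' = (s₀:ℕ∞)} from hs₀)]
        show g (X (N n ω) ω) + ((N n ω : ℕ):ℝ) = _
        rw [hNn']
      · intro s _ hss
        refine Set.indicator_of_notMem ?_ _
        intro hmem
        rw [Set.mem_setOf_eq] at hmem
        rw [hs₀] at hmem
        exact hss (Eq.symm (by exact_mod_cast hmem))
  have hZ_int : ∀ n, Integrable (Z n) μ := by
    intro n
    rw [hZ_sum n]
    refine Integrable.add (integrable_finset_sum _ fun s _ => ?_) ?_
    · exact ((hgX_int s).add (integrable_const _)).indicator (hTeq_meas s)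
    · exact ((hgX_int n).add (integrable_const _)).indicator (hB_meas n)
  have hZ_measF : ∀ n, StronglyMeasurable[natSigma X n] (Z n) := by
    intro n
    rw [hZ_sum n]
    refine Measurable.stronglyMeasurable ?_
    refine Measurable.add (Finset.measurable_sum _ fun s hs => ?_) ?_
    · have hsn : s ≤ n := by have := Finset.mem_range.mp hs; omega
      exact Measurable.indicator
        ((hg_cont.measurable.comp (measurable_natSigma hsn)).add measurable_const)
        (hTeq_measF s n hsn)
    · exact Measurable.indicator
        ((hg_cont.measurable.comp (measurable_natSigma le_rfl)).add measurable_const)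
        (hB_measF n n (by omega))
  -- recursion for Z
  have hZ_rec : ∀ n, Z (n+1) = fun ω => Z n ω
      + (A n).indicator (fun ω' => g (X (n+1) ω') - g (X n ω') + 1) ω := by
    intro n
    funext ω
    by_cases hc : (n:ℕ∞) < T ω
    · have h1 : N n ω = n := hN_of_lt n ω hc.le
      have hc' : ((n+1:ℕ):ℕ∞) ≤ T ω := by
        rw [show ((n+1:ℕ):ℕ∞) = (n:ℕ∞)+1 by push_cast; rfl]
        exact (ENat.add_one_le_iff (ENat.coe_ne_top n)).mpr hc
      have h2 : N (n+1) ω = n+1 := hN_of_lt (n+1) ω hc'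
      rw [Set.indicator_of_mem (show ω ∈ A n from hc)]
      show g (X (N (n+1) ω) ω) + ((N (n+1) ω : ℕ) : ℝ)
        = g (X (N n ω) ω) + ((N n ω : ℕ) : ℝ) + (g (X (n+1) ω) - g (X n ω) + 1)
      rw [h1, h2]
      push_cast
      ring
    · push_neg at hc
      have h1 : ((N n ω : ℕ∞)) = T ω := hN_of_ge n ω hc
      have h2 : ((N (n+1) ω : ℕ∞)) = T ω := by
        refine hN_of_ge (n+1) ω (hc.trans ?_)
        exact_mod_cast Nat.le_succ n
      have heq : N (n+1) ω = N n ω := by exact_mod_cast h2.trans h1.symm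
      rw [Set.indicator_of_notMem (show ω ∉ A n from not_lt.mpr hc)]
      show g (X (N (n+1) ω) ω) + ((N (n+1) ω : ℕ) : ℝ)
        = g (X (N n ω) ω) + ((N n ω : ℕ) : ℝ) + 0
      rw [heq, add_zero]
  -- the supermartingale step
  have hstep : ∀ n, μ[Z (n+1) | natSigma X n] ≤ᵐ[μ] Z n := by
    intro n
    have hm' : natSigma X n ≤ _ := natSigma_le hXmeas n
    set W : Ω → ℝ := fun ω => g (X (n+1) ω) - g (X n ω) + 1 with hW_def
    have hW_int : Integrable W μ := ((hgX_int (n+1)).sub (hgX_int n)).add (integrable_const 1)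
    have hInd_int : Integrable ((A n).indicator W) μ := hW_int.indicator (hA_meas n)
    have h1 : μ[Z (n+1)|natSigma X n] =ᵐ[μ] μ[Z n|natSigma X n] + μ[(A n).indicator W|natSigma X n] := by
      rw [hZ_rec n]
      exact condExp_add (hZ_int n) hInd_int _
    have h2 : μ[Z n|natSigma X n] = Z n :=
      condExp_of_stronglyMeasurable hm' (hZ_measF n) (hZ_int n)
    have h3 : μ[(A n).indicator W|natSigma X n] =ᵐ[μ] (A n).indicator (μ[W|natSigma X n]) :=
      condExp_indicator hW_int (hA_measF n)
    set V : Ω → ℝ := X (n+1) - X n with hV_def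
    have hV_int : Integrable V μ := (hXint (n+1)).sub (hXint n)
    set U : Ω → ℝ := (fun ω => k (X n ω)) * V with hU_def
    have hkXn_measF : Measurable[natSigma X n] fun ω => k (X n ω) :=
      ((driftK_antitone hpos hxminD).measurable).comp (measurable_natSigma le_rfl)
    have hU_int : Integrable U μ := by
      refine Integrable.bdd_mul hV_int
        ((hkXn_measF.mono hm' le_rfl).aestronglyMeasurable) (c := (h xmin)⁻¹) (ae_of_all _ fun ω => ?_)
      rw [Real.norm_eq_abs, abs_of_nonneg (driftK_nonneg hpos hxminD _)]
      exact driftK_le hpos hxminD _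
    have hWU : ∀ ω, W ω ≤ U ω + 1 := by
      intro ω
      have hkey := driftG_key hpos hxminD (xmin := xmin) (X n ω) (X (n+1) ω)
      simp only [hW_def, hU_def, hV_def, Pi.mul_apply, Pi.sub_apply]
      rw [← hg_def, ← hk_def] at hkey
      nlinarith [hkey]
    have h4 : μ[W|natSigma X n] ≤ᵐ[μ] μ[fun ω => U ω + 1|natSigma X n] :=
      condExp_mono hW_int (hU_int.add (integrable_const 1)) (ae_of_all _ hWU)
    have h5 : μ[fun ω => U ω + 1|natSigma X n] =ᵐ[μ] μ[U|natSigma X n] + fun _ => (1:ℝ) := by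
      refine (condExp_add hU_int (integrable_const (1:ℝ)) _).trans ?_
      rw [condExp_const hm' (1:ℝ)]
    have h6 : μ[U|natSigma X n] =ᵐ[μ] (fun ω => k (X n ω)) * μ[V|natSigma X n] :=
      condExp_mul_of_stronglyMeasurable_left hkXn_measF.stronglyMeasurable
        (by rw [← hU_def]; exact hU_int) hV_int
    have h7 : μ[V|natSigma X n] =ᵐ[μ] μ[X (n+1)|natSigma X n] - X n := by
      refine (condExp_sub (hXint (n+1)) (hXint n) _).trans ?_
      rw [condExp_of_stronglyMeasurable hm'
        ((measurable_natSigma le_rfl).stronglyMeasurable) (hXint n)]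
    have key : ∀ᵐ ω ∂μ, ω ∈ A n → (μ[W|natSigma X n]) ω ≤ 0 := by
      filter_upwards [h4, h5, h6, h7, hdrift n] with ω h4ω h5ω h6ω h7ω hdω hmem
      have hlt : (n:ℕ∞) < T ω := hmem
      have hx : xmin ≤ X n ω := (lt_T_iff X xmin T hT ω n).mp hlt n le_rfl
      have hXD : X n ω ∈ D := hDmem n ω hlt.le hx
      have hkeq : k (X n ω) = (h (X n ω))⁻¹ := driftK_eq hmono hpos hxminD hXD hx
      have hknn : 0 ≤ k (X n ω) := driftK_nonneg hpos hxminD _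
      have hhpos : 0 < h (X n ω) := hpos _ hXD
      have hcond : (μ[X (n+1)|natSigma X n]) ω - X n ω ≤ -h (X n ω) := by
        have := hdω hlt
        linarith
      have hmul : k (X n ω) * ((μ[X (n+1)|natSigma X n]) ω - X n ω) ≤ -1 := by
        calc k (X n ω) * ((μ[X (n+1)|natSigma X n]) ω - X n ω)
            ≤ k (X n ω) * (-h (X n ω)) := mul_le_mul_of_nonneg_left hcond hknn
          _ = -1 := by rw [hkeq]; field_simp
      have h6' : (μ[U|natSigma X n]) ω = k (X n ω) * ((μ[X (n+1)|natSigma X n]) ω - X n ω) := by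
        rw [h6ω, Pi.mul_apply, h7ω, Pi.sub_apply]
      calc (μ[W|natSigma X n]) ω ≤ (μ[fun ω => U ω + 1|natSigma X n]) ω := h4ω
        _ = (μ[U|natSigma X n]) ω + 1 := by rw [h5ω]; rfl
        _ = k (X n ω) * ((μ[X (n+1)|natSigma X n]) ω - X n ω) + 1 := by rw [h6']
        _ ≤ -1 + 1 := by linarith
        _ = 0 := by ring
    filter_upwards [h1, h3, key] with ω h1ω h3ω keyω
    rw [h1ω, Pi.add_apply, h2, h3ω]
    by_cases hmem : ω ∈ A n
    · rw [Set.indicator_of_mem hmem]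
      have := keyω hmem
      linarith
    · rw [Set.indicator_of_notMem hmem]
      simp
  -- tower property: conditional expectation given X 0
  have hZ0 : Z 0 = fun ω => g (X 0 ω) := by
    funext ω
    have : N 0 ω = 0 := hN_of_lt 0 ω (by exact_mod_cast (zero_le : (0:ℕ∞) ≤ T ω))
    show g (X (N 0 ω) ω) + ((N 0 ω : ℕ) : ℝ) = g (X 0 ω)
    rw [this]
    simp
  have hF : ∀ n, μ[Z n|natSigma X 0] ≤ᵐ[μ] fun ω => g (X 0 ω) := by
    intro n
    induction n with
    | zero =>
      rw [condExp_of_stronglyMeasurable (natSigma_le hXmeas 0) (hZ_measF 0) (hZ_int 0), hZ0]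
    | succ n ih =>
      have htow : μ[Z (n+1)|natSigma X 0] =ᵐ[μ] μ[μ[Z (n+1)|natSigma X n]|natSigma X 0] :=
        (condExp_condExp_of_le (natSigma_mono (Nat.zero_le n)) (natSigma_le hXmeas n)).symm
      exact htow.le.trans ((condExp_mono integrable_condExp (hZ_int n) (hstep n)).trans ih)
  have hNbound : ∀ n, μ[fun ω => ((N n ω : ℕ):ℝ)|natSigma X 0] ≤ᵐ[μ] fun ω => g (X 0 ω) := by
    intro n
    have hle : (fun ω => ((N n ω : ℕ):ℝ)) ≤ᵐ[μ] Z n := by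
      filter_upwards [ae_all_iff.mpr hnonneg] with ω hnn
      have hXnn : 0 ≤ X (N n ω) ω := hnn (N n ω) (hN_le_T n ω)
      have hgnn : 0 ≤ g (X (N n ω) ω) := driftG_nonneg hpos hxminD hxmin hXnn
      show ((N n ω : ℕ):ℝ) ≤ g (X (N n ω) ω) + ((N n ω : ℕ):ℝ)
      linarith
    exact (condExp_mono (hN_int n) (hZ_int n) hle).trans (hF n)
  -- pass to the conditional kernel
  have hns0 : natSigma X 0 = MeasurableSpace.comap (X 0) inferInstance := natSigma_zero
  have hm0 : MeasurableSpace.comap (X 0) inferInstance ≤ (inferInstance : MeasurableSpace Ω) := by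
    rw [← hns0]; exact natSigma_le hXmeas 0
  have hker : ∀ n, μ[fun ω => ((N n ω : ℕ):ℝ)|MeasurableSpace.comap (X 0) inferInstance]
      =ᵐ[μ] fun ω => ∫ ω', ((N n ω' : ℕ):ℝ) ∂(condExpKernel μ (MeasurableSpace.comap (X 0) inferInstance) ω) :=
    fun n => condExp_ae_eq_integral_condExpKernel hm0 (hN_int n)
  have hcomb : ∀ n, ∀ᵐ ω ∂μ,
      ∫ ω', ((N n ω' : ℕ):ℝ) ∂(condExpKernel μ (MeasurableSpace.comap (X 0) inferInstance) ω) ≤ g (X 0 ω) := by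
    intro n
    have hb := hNbound n
    rw [hns0] at hb
    filter_upwards [hker n, hb] with ω e b
    rw [← e]
    exact b
  filter_upwards [hstart, ae_all_iff.mpr hcomb] with ω hs hb
  have hX0D : X 0 ω ∈ D := hDmem 0 ω (by exact_mod_cast (zero_le : (0:ℕ∞) ≤ T ω)) hs
  haveI : IsProbabilityMeasure ((condExpKernel μ (MeasurableSpace.comap (X 0) inferInstance)) ω) := inferInstance
  have hpt : ∀ ω', (T ω' : ℝ≥0∞) = ⨆ n, ENNReal.ofReal (((N n ω' : ℕ):ℝ)) := fun ω' =>
    (iSup_ofReal_min_toNat (T ω')).symm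
  calc ∫⁻ ω', (T ω' : ℝ≥0∞) ∂(condExpKernel μ (MeasurableSpace.comap (X 0) inferInstance) ω)
      = ∫⁻ ω', ⨆ n, ENNReal.ofReal (((N n ω' : ℕ):ℝ)) ∂(condExpKernel μ (MeasurableSpace.comap (X 0) inferInstance) ω) :=
        lintegral_congr fun ω' => hpt ω'
    _ = ⨆ n, ∫⁻ ω', ENNReal.ofReal (((N n ω' : ℕ):ℝ)) ∂(condExpKernel μ (MeasurableSpace.comap (X 0) inferInstance) ω) := by
        refine lintegral_iSup (fun n => ENNReal.measurable_ofReal.comp (hN_meas n)) ?_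
        intro n m hnm ω'
        exact ENNReal.ofReal_le_ofReal (by exact_mod_cast hN_mono ω' hnm)
    _ = ⨆ n, ENNReal.ofReal (∫ ω', ((N n ω' : ℕ):ℝ) ∂(condExpKernel μ (MeasurableSpace.comap (X 0) inferInstance) ω)) := by
        refine iSup_congr fun n => ?_
        refine (ofReal_integral_eq_lintegral_ofReal ?_ (ae_of_all _ fun ω' => by positivity)).symm
        refine Integrable.mono' (integrable_const ((n:ℕ):ℝ)) (hN_meas n).aestronglyMeasurable ?_
        refine ae_of_all _ fun ω' => ?_
        rw [Real.norm_eq_abs, abs_of_nonneg (by positivity)]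
        exact_mod_cast hN_le n ω'
    _ ≤ ENNReal.ofReal (g (X 0 ω)) := iSup_le fun n => ENNReal.ofReal_le_ofReal (hb n)
    _ = ENNReal.ofReal (xmin / h xmin + ∫ z in xmin..(X 0 ω), 1 / h z) := by
        congr 1
        rw [hg_def, driftG]
        congr 1
        refine intervalIntegral.integral_congr fun z hz => ?_
        rw [Set.uIcc_of_le hs] at hz
        have hzD : z ∈ D := hDconn.out hxminD hX0D hz
        rw [driftK_eq hmono hpos hxminD hzD hz.1, one_div]
end
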